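/- Assume the weight matrix ω is symmetric. Then the autonomous Hopfield network has no nonconstant periodic solutions: if x : ℝ → ℝ^N is a solution and there exists T > 0 with x(t + T) = x(t) for all t ∈ ℝ, then x is constant (and its value is an equilibrium). -/

import Mathlib

open Real

noncomputable def F (lam s : ℝ) : ℝ := (2 / Real.pi) * Real.arctan (lam * Real.pi * s / 2)

noncomputable def u (N : ℕ) (lam g : ℝ) (ω : Fin N → Fin N → ℝ) (x : Fin N → ℝ) (i : Fin N) : ℝ :=
  -x i + g * ∑ j, F lam (ω i j) * F lam (x j)

/-- Derivative of the activation function. -/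
lemma hasDerivAt_F (lam s : ℝ) :
    HasDerivAt (F lam) (lam / (1 + (lam * Real.pi * s / 2)^2)) s := by
  have h1 : HasDerivAt (fun s : ℝ => lam * Real.pi * s / 2) (lam * Real.pi / 2) s := by
    simpa using ((hasDerivAt_id s).const_mul (lam * Real.pi)).div_const 2
  have h2 := (Real.hasDerivAt_arctan (lam * Real.pi * s / 2)).comp s h1
  have h3 := h2.const_mul (2 / Real.pi)
  convert h3 using 1
  have hd : 1 + (lam * Real.pi * s / 2)^2 ≠ 0 := by positivity
  · rfl
  · rfl
  · funext y; simp only [F, Function.comp]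
  field_simp

/-- Derivative of the potential term of the energy. -/
lemma hasDerivAt_G (lam s : ℝ) (hlam : lam ≠ 0) :
    HasDerivAt (fun s => (2 / (lam * Real.pi ^ 2)) * Real.log (1 + (lam * Real.pi * s / 2)^2))
      (s * (lam / (1 + (lam * Real.pi * s / 2)^2))) s := by
  have h1 : HasDerivAt (fun s : ℝ => lam * Real.pi * s / 2) (lam * Real.pi / 2) s := by
    simpa using ((hasDerivAt_id s).const_mul (lam * Real.pi)).div_const 2
  have h2 : HasDerivAt (fun s : ℝ => 1 + (lam * Real.pi * s / 2)^2)
      ((2 : ℕ) * (lam * Real.pi * s / 2) ^ 1 * (lam * Real.pi / 2)) s := by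
    exact (h1.pow 2).const_add 1
  have hne : (1 : ℝ) + (lam * Real.pi * s / 2)^2 ≠ 0 := by positivity
  have hπ : Real.pi ≠ 0 := Real.pi_ne_zero
  have h3 := (h2.log hne).const_mul (2 / (lam * Real.pi ^ 2))
  convert h3 using 1
  · rfl
  · rfl
  field_simp
  ring

/-- Algebraic identity underlying the energy dissipation computation. -/
lemma energy_alg (N : ℕ) (g : ℝ) (W : Fin N → Fin N → ℝ) (hWsym : ∀ i j, W i j = W j i)
    (Xv Ff Dd d : Fin N → ℝ) (hd : ∀ i, d i = -Xv i + g * ∑ j, W i j * Ff j) :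
    -∑ i, Dd i * (d i)^2
      = -(g/2) * ∑ i, ∑ j, W i j * ((Dd i * d i) * Ff j + Ff i * (Dd j * d j))
        + ∑ i, (Xv i * Dd i) * d i := by
  have hswap : ∑ i, ∑ j, W i j * (Ff i * (Dd j * d j))
      = ∑ i, ∑ j, W i j * ((Dd i * d i) * Ff j) := by
    rw [Finset.sum_comm]
    refine Finset.sum_congr rfl fun i _ => Finset.sum_congr rfl fun j _ => ?_
    rw [hWsym j i]; ring
  have hdouble : ∑ i, ∑ j, W i j * ((Dd i * d i) * Ff j + Ff i * (Dd j * d j))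
      = ∑ i, 2 * (Dd i * d i * ∑ j, W i j * Ff j) := by
    simp_rw [mul_add, Finset.sum_add_distrib]
    rw [hswap, ← Finset.sum_add_distrib]
    refine Finset.sum_congr rfl fun i _ => ?_
    rw [← Finset.sum_add_distrib]
    conv_rhs => rw [Finset.mul_sum, Finset.mul_sum]
    exact Finset.sum_congr rfl fun j _ => by ring
  rw [hdouble, Finset.mul_sum, ← Finset.sum_add_distrib, ← Finset.sum_neg_distrib]
  refine Finset.sum_congr rfl fun i _ => ?_
  rw [hd i]
  ring

/-- For symmetric ω, the autonomous Hopfield network has no nonconstant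
periodic solutions: a T-periodic solution is constant and its value is an equilibrium. -/
theorem hopfield_no_periodic_orbits (N : ℕ) (hN : 1 ≤ N) (lam g : ℝ)
    (hlam : 0 < lam) (hg : 0 < g) (ω : Fin N → Fin N → ℝ)
    (hsym : ∀ i j, ω i j = ω j i)
    (x : ℝ → Fin N → ℝ)
    (hsol : ∀ (t : ℝ) (i : Fin N), HasDerivAt (fun s => x s i) (u N lam g ω (x t) i) t)
    (T : ℝ) (hT : 0 < T) (hper : ∀ t : ℝ, x (t + T) = x t) :
    (∀ t s : ℝ, x t = x s) ∧ (∀ i, u N lam g ω (x 0) i = 0) := by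
  have hFdpos : ∀ s : ℝ, 0 < lam / (1 + (lam * Real.pi * s / 2)^2) := by
    intro s
    have : (0:ℝ) < 1 + (lam * Real.pi * s / 2)^2 := by positivity
    exact div_pos hlam this
  -- the energy function
  set E : ℝ → ℝ := fun t =>
    -(g/2) * ∑ i, ∑ j, F lam (ω i j) * (F lam (x t i) * F lam (x t j)) +
      ∑ i, (2 / (lam * Real.pi ^ 2)) * Real.log (1 + (lam * Real.pi * (x t i) / 2)^2) with hE
  -- E has derivative  -∑ F'(xᵢ) uᵢ²  at each time
  have hEderiv : ∀ t, HasDerivAt E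
      (-∑ i, (lam / (1 + (lam * Real.pi * (x t i) / 2)^2)) * (u N lam g ω (x t) i)^2) t := by
    intro t
    have hFx : ∀ i, HasDerivAt (fun s => F lam (x s i))
        ((lam / (1 + (lam * Real.pi * (x t i) / 2)^2)) * u N lam g ω (x t) i) t := fun i =>
      by have := (hasDerivAt_F lam (x t i)).comp t (hsol t i); exact this
    have hGx : ∀ i, HasDerivAt
        (fun s => (2 / (lam * Real.pi ^ 2)) * Real.log (1 + (lam * Real.pi * (x s i) / 2)^2))
        ((x t i * (lam / (1 + (lam * Real.pi * (x t i) / 2)^2))) * u N lam g ω (x t) i) t :=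
      fun i => by have := (hasDerivAt_G lam (x t i) hlam.ne').comp t (hsol t i); exact this
    have hterm1 : HasDerivAt
        (fun s => ∑ i, ∑ j, F lam (ω i j) * (F lam (x s i) * F lam (x s j)))
        (∑ i, ∑ j, F lam (ω i j) *
          (((lam / (1 + (lam * Real.pi * (x t i) / 2)^2)) * u N lam g ω (x t) i) * F lam (x t j) +
            F lam (x t i) *
              ((lam / (1 + (lam * Real.pi * (x t j) / 2)^2)) * u N lam g ω (x t) j))) t := by
      apply HasDerivAt.fun_sum
      intro i _
      apply HasDerivAt.fun_sum
      intro j _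
      exact ((hFx i).mul (hFx j)).const_mul _
    have hterm2 : HasDerivAt
        (fun s => ∑ i, (2 / (lam * Real.pi ^ 2)) *
            Real.log (1 + (lam * Real.pi * (x s i) / 2)^2))
        (∑ i, (x t i * (lam / (1 + (lam * Real.pi * (x t i) / 2)^2))) * u N lam g ω (x t) i)
        t := by
      apply HasDerivAt.fun_sum
      intro i _
      exact hGx i
    have htot := (hterm1.const_mul (-(g/2))).add hterm2
    convert htot using 1
    · rfl
    · rfl
    · rfl
    exact energy_alg N g (fun i j => F lam (ω i j))
      (fun i j => by rw [hsym])
      (fun i => x t i) (fun i => F lam (x t i))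
      (fun i => lam / (1 + (lam * Real.pi * (x t i) / 2)^2))
      (fun i => u N lam g ω (x t) i)
      (fun i => rfl)
  -- the derivative is nonpositive
  have he'nonpos : ∀ t,
      (-∑ i, (lam / (1 + (lam * Real.pi * (x t i) / 2)^2)) * (u N lam g ω (x t) i)^2) ≤ 0 := by
    intro t
    simp only [neg_nonpos]
    apply Finset.sum_nonneg
    intro i _
    exact mul_nonneg (hFdpos _).le (sq_nonneg _)
  -- E is antitone
  have hEanti : Antitone E := by
    apply antitone_of_deriv_nonpos
    · intro t; exact (hEderiv t).differentiableAt
    · intro t; rw [(hEderiv t).deriv]; exact he'nonpos t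
  -- E is periodic
  have hEper : ∀ t, E (t + T) = E t := by
    intro t; rw [hE]; simp only [hper t]
  have hEpern : ∀ (n : ℕ) (t : ℝ), E (t + n * T) = E t := by
    intro n
    induction n with
    | zero => intro t; simp
    | succ n ih =>
      intro t
      have h : t + (n + 1 : ℕ) * T = (t + T) + n * T := by push_cast; ring
      rw [h, ih, hEper]
  -- E is constant
  have hEconst : ∀ a b : ℝ, a ≤ b → E a = E b := by
    intro a b hab
    obtain ⟨n, hn⟩ := exists_nat_ge ((b - a) / T)
    have hbn : b ≤ a + n * T := by
      have := (div_le_iff₀ hT).mp hn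
      linarith
    have h1 : E b ≤ E a := hEanti hab
    have h2 : E (a + n * T) ≤ E b := hEanti hbn
    rw [hEpern n a] at h2
    linarith
  -- hence the derivative is identically zero
  have he'zero : ∀ t,
      (-∑ i, (lam / (1 + (lam * Real.pi * (x t i) / 2)^2)) * (u N lam g ω (x t) i)^2) = 0 := by
    intro t
    have hfun : E = fun _ => E 0 := by
      funext s
      rcases le_total s 0 with h | h
      · exact hEconst s 0 h
      · exact (hEconst 0 s h).symm
    have h0 : HasDerivAt E 0 t := by
      rw [hfun]; exact hasDerivAt_const t (E 0)
    exact (hEderiv t).unique h0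
  -- hence u vanishes everywhere
  have hu0 : ∀ (t : ℝ) (i : Fin N), u N lam g ω (x t) i = 0 := by
    intro t i
    have hsum : ∑ i, (lam / (1 + (lam * Real.pi * (x t i) / 2)^2)) * (u N lam g ω (x t) i)^2
        = 0 := by
      have := he'zero t
      simpa [neg_eq_zero] using this
    have hterm := (Finset.sum_eq_zero_iff_of_nonneg
      (fun j _ => mul_nonneg (hFdpos _).le (sq_nonneg _))).mp hsum i (Finset.mem_univ i)
    have hsq := (mul_eq_zero.mp hterm).resolve_left (ne_of_gt (hFdpos _))
    exact (pow_eq_zero_iff two_ne_zero).mp hsq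
  -- hence x is constant
  have hxconst : ∀ t s : ℝ, x t = x s := by
    intro t s
    funext i
    have hderiv : ∀ r : ℝ, HasDerivAt (fun s => x s i) 0 r := by
      intro r
      have := hsol r i
      rwa [hu0 r i] at this
    exact is_const_of_deriv_eq_zero
      (fun r => (hderiv r).differentiableAt) (fun r => (hderiv r).deriv) t s
  exact ⟨hxconst, hu0 0⟩
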